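/- Suppose κ₀ > 0, ε ∈ (0,1), δ(ε) ∈ (0,1), Λ > f(0⁺)+1, and let ζ* ∈ A_{ε,Λ} and μ ∈ ℝ be such that, with ψ := Kζ* + q − μ, a.e. in D one has ζ* ≥ (δ(ε)/ε²)·f(ψ) on {ψ > 0} (this holds in particular for the maximizer of E over A_{ε,Λ} with its Lagrange multiplier μ). If moreover ‖R‖_{L∞(D×D)}·κ₀·δ(ε) ≤ 1 and (f(0⁺)+1)·ν(D) > κ₀·ε², then μ ≥ −f⁻¹(f(0⁺)+1) + min_{cl(D)} q − 1. -/

import Mathlib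

open MeasureTheory Metric Real Set Filter

noncomputable section

abbrev Pt : Type := EuclideanSpace ℝ (Fin 2)

/-- The operator `K` of the abstract lake-kernel setup:
`Kζ(x) = b(x)∫_D G(x,y)ζ(y) dν(y) + ∫_D R(x,y)ζ(y) dν(y)`, where `dν = b dm`. -/
def Kop (D : Set Pt) (b : Pt → ℝ) (G R : Pt → Pt → ℝ) (ζ : Pt → ℝ) (x : Pt) : ℝ :=
  b x * (∫ y in D, G x y * ζ y * b y) + ∫ y in D, R x y * ζ y * b y

/-- `F_*(s) = ∫₀^s f⁻¹(r) dr`. -/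
def Fstar (finv : ℝ → ℝ) (s : ℝ) : ℝ := ∫ r in (0:ℝ)..s, finv r

/-- The admissible class `A_{ε,Λ}`:
`0 ≤ ζ ≤ Λδ(ε)/ε²` a.e. in `D` and `∫_D ζ dν = κ₀ δ(ε)`. -/
def InA (D : Set Pt) (b : Pt → ℝ) (κ₀ ε δ Λ : ℝ) (ζ : Pt → ℝ) : Prop :=
  Measurable ζ ∧ (∀ᵐ x ∂(volume.restrict D), 0 ≤ ζ x ∧ ζ x ≤ Λ * δ / ε ^ 2) ∧
    (∫ x in D, ζ x * b x) = κ₀ * δ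

/-- The energy functional
`E(ζ) = (1/2)∫_D ζ·Kζ dν + ∫_D qζ dν − (δ/ε²)∫_D F_*((ε²/δ)ζ) dν`. -/
def Efun (D : Set Pt) (b q : Pt → ℝ) (G R : Pt → Pt → ℝ) (finv : ℝ → ℝ)
    (ε δ : ℝ) (ζ : Pt → ℝ) : ℝ :=
  (1/2) * (∫ x in D, ζ x * Kop D b G R ζ x * b x)
    + (∫ x in D, q x * ζ x * b x)
    - (δ / ε ^ 2) * ∫ x in D, Fstar finv ((ε ^ 2 / δ) * ζ x) * b x

/-- Lower bound (2-5) for the Lagrange multiplier `μ`: if `ζ* ∈ A_{ε,Λ}` and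
`ζ* ≥ (δ/ε²)·f(ψ)` a.e. on `{ψ > 0}` where `ψ := Kζ* + q − μ`, and moreover
`‖R‖_∞ κ₀ δ ≤ 1` and `(f(0⁺)+1)·ν(D) > κ₀ ε²`, then
`μ ≥ −f⁻¹(f(0⁺)+1) + min_{cl(D)} q − 1`. -/
theorem stmt4
    -- the domain
    (D : Set Pt) (hDo : IsOpen D) (hDne : D.Nonempty) (hDbdd : Bornology.IsBounded D)
    -- the depth function
    (b : Pt → ℝ) (hb : ContinuousOn b (closure D)) (hbpos : ∀ x ∈ D, 0 < b x)
    -- the background stream function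
    (q : Pt → ℝ) (hq : ContinuousOn q (closure D))
    -- the kernel G
    (G : Pt → Pt → ℝ) (hGm : Measurable (Function.uncurry G))
    (hGsymm : ∀ x y, G x y = G y x)
    (hGbd : ∀ᵐ p ∂((volume.restrict D).prod (volume.restrict D)),
      0 ≤ G p.1 p.2 ∧ G p.1 p.2 ≤ (1 / (2 * π)) * log (diam D / dist p.1 p.2))
    -- the correction kernel R
    (R : Pt → Pt → ℝ) (hRm : Measurable (Function.uncurry R))
    (hRsymm : ∀ x y, R x y = R y x) (CR : ℝ) (hCR : ∀ x y, |R x y| ≤ CR)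
    -- the nonlinearity f satisfying (H1) with f → ∞ at ∞, and its inverse finv
    (f : ℝ → ℝ) (f0 : ℝ)
    (hfc : ContinuousOn f ({(0:ℝ)}ᶜ)) (hfneg : ∀ s ≤ (0:ℝ), f s = 0)
    (hfmono : StrictMonoOn f (Ici (0:ℝ)))
    (hf0 : Tendsto f (nhdsWithin 0 (Ioi 0)) (nhds f0)) (hf0n : 0 ≤ f0)
    (hfinf : Tendsto f atTop atTop)
    (finv : ℝ → ℝ) (hfinv0 : ∀ s ≤ f0, finv s = 0)
    (hfinvl : ∀ s ≥ (0:ℝ), finv (f s) = s) (hfinvr : ∀ t ≥ f0, f (finv t) = t)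
    -- the parameters
    (κ₀ ε δ Λ : ℝ) (hκ : 0 < κ₀) (hε : ε ∈ Ioo (0:ℝ) 1) (hδ : δ ∈ Ioo (0:ℝ) 1)
    (hΛ : Λ > f0 + 1)
    -- ζ* and its multiplier μ
    (ζstar : Pt → ℝ) (hζstar : InA D b κ₀ ε δ Λ ζstar) (μ : ℝ)
    (hprofile : ∀ᵐ x ∂(volume.restrict D),
      0 < Kop D b G R ζstar x + q x - μ →
        (δ / ε ^ 2) * f (Kop D b G R ζstar x + q x - μ) ≤ ζstar x)
    -- the smallness assumptions
    (hRsmall : CR * κ₀ * δ ≤ 1)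
    (hvol : (f0 + 1) * (∫ x in D, b x) > κ₀ * ε ^ 2) :
    μ ≥ -finv (f0 + 1) + sInf (q '' closure D) - 1 := by
  by_contra hcon
  push_neg at hcon
  obtain ⟨hζm, hζbd, hζint⟩ := hζstar
  have hε2 : (0:ℝ) < ε ^ 2 := pow_pos hε.1 2
  have hδ0 : (0:ℝ) < δ := hδ.1
  have hΛ0 : (0:ℝ) ≤ Λ := by linarith
  have hDmeas : MeasurableSet D := hDo.measurableSet
  have hfinD : IsFiniteMeasure (volume.restrict D) := ⟨by
    rw [Measure.restrict_apply_univ]; exact hDbdd.measure_lt_top⟩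
  have hDc : IsCompact (closure D) := hDbdd.isCompact_closure
  obtain ⟨M, hM⟩ := hDc.exists_bound_of_continuousOn hb
  have hbm : AEMeasurable b (volume.restrict D) :=
    (hb.mono subset_closure).aemeasurable hDmeas
  have hbnn : ∀ᵐ y ∂(volume.restrict D), 0 ≤ b y :=
    (ae_restrict_iff' hDmeas).2 (ae_of_all _ fun x hx => (hbpos x hx).le)
  have hbM : ∀ᵐ y ∂(volume.restrict D), ‖b y‖ ≤ M :=
    (ae_restrict_iff' hDmeas).2 (ae_of_all _ fun x hx => hM x (subset_closure hx))
  have hζb_meas : AEStronglyMeasurable (fun y => ζstar y * b y) (volume.restrict D) :=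
    (hζm.aemeasurable.mul hbm).aestronglyMeasurable
  have hζb_int : Integrable (fun y => ζstar y * b y) (volume.restrict D) := by
    refine (integrable_const (Λ * δ / ε ^ 2 * M)).mono' hζb_meas ?_
    filter_upwards [hζbd, hbnn, hbM] with y h1 h2 h3
    have hMnn : (0:ℝ) ≤ M := le_trans (norm_nonneg _) h3
    rw [Real.norm_eq_abs, abs_mul, abs_of_nonneg h1.1]
    exact mul_le_mul h1.2 (by simpa using h3) (abs_nonneg _) (div_nonneg (mul_nonneg hΛ0 hδ0.le) hε2.le)
  have hb_int : Integrable b (volume.restrict D) := by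
    refine (integrable_const M).mono' hbm.aestronglyMeasurable ?_
    exact hbM
  have hCR0 : (0:ℝ) ≤ CR :=
    le_trans (abs_nonneg _) (hCR hDne.choose hDne.choose)
  have hqim : IsCompact (q '' closure D) := hDc.image_of_continuousOn hq
  have hqlb : ∀ x ∈ D, sInf (q '' closure D) ≤ q x := fun x hx =>
    csInf_le hqim.bddBelow ⟨x, subset_closure hx, rfl⟩
  have hfinvnn : (0:ℝ) ≤ finv (f0 + 1) := by
    by_contra h
    push_neg at h
    have h1 := hfinvr (f0 + 1) (by linarith)
    rw [hfneg _ h.le] at h1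
    linarith
  have hGae : ∀ᵐ x ∂(volume.restrict D), ∀ᵐ y ∂(volume.restrict D),
      0 ≤ G x y ∧ G x y ≤ (1 / (2 * π)) * log (diam D / dist x y) :=
    Measure.ae_ae_of_ae_prod hGbd
  -- key pointwise bound
  have key : ∀ᵐ x ∂(volume.restrict D), (δ / ε ^ 2) * (f0 + 1) ≤ ζstar x := by
    filter_upwards [hGae, hbnn, hprofile, ae_restrict_mem hDmeas] with x hGx hbx hpx hxD
    have h1 : 0 ≤ ∫ y in D, G x y * ζstar y * b y := by
      apply integral_nonneg_of_ae
      filter_upwards [hGx, hζbd, hbnn] with y hg hz hb'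
      exact mul_nonneg (mul_nonneg hg.1 hz.1) hb'
    have hRxm : Measurable fun y => R x y := hRm.of_uncurry_left
    have h2 : Integrable (fun y => R x y * ζstar y * b y) (volume.restrict D) := by
      refine (hζb_int.const_mul CR).mono'
        (((hRxm.aemeasurable.mul hζm.aemeasurable).mul hbm).aestronglyMeasurable) ?_
      filter_upwards [hζbd, hbnn] with y hz hb'
      have h0 : 0 ≤ ζstar y * b y := mul_nonneg hz.1 hb'
      calc ‖R x y * ζstar y * b y‖ = |R x y| * (ζstar y * b y) := by
            rw [Real.norm_eq_abs, abs_mul, abs_mul, abs_of_nonneg hz.1, abs_of_nonneg hb']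
            ring
        _ ≤ CR * (ζstar y * b y) := mul_le_mul_of_nonneg_right (hCR x y) h0
    have h3 : -(CR * (κ₀ * δ)) ≤ ∫ y in D, R x y * ζstar y * b y := by
      have hae : ∀ᵐ y ∂(volume.restrict D),
          (fun y => -(CR * (ζstar y * b y))) y ≤ R x y * ζstar y * b y := by
        filter_upwards [hζbd, hbnn] with y hz hb'
        have h0 : 0 ≤ ζstar y * b y := mul_nonneg hz.1 hb'
        have h' : -CR * (ζstar y * b y) ≤ R x y * (ζstar y * b y) :=
          mul_le_mul_of_nonneg_right ((abs_le.1 (hCR x y)).1) h0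
        calc -(CR * (ζstar y * b y)) = -CR * (ζstar y * b y) := by ring
          _ ≤ R x y * (ζstar y * b y) := h'
          _ = R x y * ζstar y * b y := by ring
      have := integral_mono_ae (hζb_int.const_mul CR).neg h2 hae
      simp only [Pi.neg_apply] at this
      rwa [integral_neg, integral_const_mul, hζint] at this
    have hKx : -1 ≤ Kop D b G R ζstar x := by
      have t1 : 0 ≤ b x * ∫ y in D, G x y * ζstar y * b y := mul_nonneg hbx h1
      have hr : CR * (κ₀ * δ) = CR * κ₀ * δ := by ring
      unfold Kop
      rw [hr] at h3
      linarith
    have hψ : finv (f0 + 1) < Kop D b G R ζstar x + q x - μ := by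
      have := hqlb x hxD
      linarith
    have hψ0 : (0:ℝ) < Kop D b G R ζstar x + q x - μ := lt_of_le_of_lt hfinvnn hψ
    have hfψ : f0 + 1 < f (Kop D b G R ζstar x + q x - μ) := by
      have := hfmono (mem_Ici.2 hfinvnn) (mem_Ici.2 hψ0.le) hψ
      rwa [hfinvr (f0 + 1) (by linarith)] at this
    have := hpx hψ0
    have hle : (δ / ε ^ 2) * (f0 + 1) ≤
        (δ / ε ^ 2) * f (Kop D b G R ζstar x + q x - μ) :=
      mul_le_mul_of_nonneg_left hfψ.le (div_nonneg hδ0.le hε2.le)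
    linarith
  -- integrate
  have hineq : ∫ x in D, (δ / ε ^ 2 * (f0 + 1)) * b x ≤ ∫ x in D, ζstar x * b x := by
    refine integral_mono_ae (hb_int.const_mul _) hζb_int ?_
    filter_upwards [key, hbnn] with x hx hb'
    exact mul_le_mul_of_nonneg_right hx hb'
  rw [hζint, integral_const_mul] at hineq
  have hc : (0:ℝ) < δ / ε ^ 2 := div_pos hδ0 hε2
  have h5 : δ / ε ^ 2 * (κ₀ * ε ^ 2) < δ / ε ^ 2 * ((f0 + 1) * ∫ x in D, b x) :=
    mul_lt_mul_of_pos_left hvol hc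
  have h6 : δ / ε ^ 2 * (κ₀ * ε ^ 2) = κ₀ * δ := by
    rw [mul_comm κ₀, ← mul_assoc, div_mul_cancel₀ _ hε2.ne', mul_comm]
  have h7 : δ / ε ^ 2 * ((f0 + 1) * ∫ x in D, b x)
      = δ / ε ^ 2 * (f0 + 1) * ∫ x in D, b x := by ring
  linarith
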